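/- In a partially ordered vector space X, the interior of the cone X₊ with respect to the order topology equals the set of all net catching elements of X. -/

import Mathlib

/-- A net decreases to `x`: antitone with infimum `x`. -/
def DecrTo {ι X : Type*} [Preorder ι] [Preorder X] (f : ι → X) (x : X) : Prop :=
  Antitone f ∧ IsGLB (Set.range f) x

/-- `M` is a net catching set for `x`. -/
def NetCatchingSetFor {X : Type*} [AddCommGroup X] [PartialOrder X] [IsOrderedAddMonoid X] (M : Set X) (x : X) : Prop :=
  ∀ (ι : Type) [Preorder ι], Nonempty ι → Directed (· ≤ ·) (id : ι → ι) →
    ∀ f : ι → X, DecrTo f 0 → ∃ α : ι, Set.Icc (x - f α) (x + f α) ⊆ M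

/-- `O` is order open. -/
def OrderOpen {X : Type*} [AddCommGroup X] [PartialOrder X] [IsOrderedAddMonoid X] (O : Set X) : Prop :=
  ∀ x ∈ O, NetCatchingSetFor O x

/-- `y` is a net catching element: every net decreasing to `0` eventually
lies below `y`. -/
def NetCatchingElem {X : Type*} [Preorder X] [Zero X] (y : X) : Prop :=
  ∀ (ι : Type) [Preorder ι], Nonempty ι → Directed (· ≤ ·) (id : ι → ι) →
    ∀ f : ι → X, DecrTo f (0 : X) → ∃ α : ι, f α ≤ y


section aux
variable {X : Type*} [AddCommGroup X] [PartialOrder X] [IsOrderedAddMonoid X] [Module ℝ X] [PosSMulStrictMono ℝ X] [PosSMulReflectLT ℝ X]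

lemma smul_mono' (c : ℝ) (hc : 0 ≤ c) {a b : X} (h : a ≤ b) : c • a ≤ c • b :=
  smul_le_smul_of_nonneg_left h hc

lemma half_two (a : X) : (1/2:ℝ) • ((2:ℝ) • a) = a := by
  rw [smul_smul]; norm_num

lemma half_le {a x : X} (h : (2:ℝ) • a ≤ x) : a ≤ (1/2:ℝ) • x := by
  have := smul_mono' (1/2) (by norm_num) h
  rwa [half_two] at this

lemma half_le' {b a : X} (h : b ≤ (2:ℝ) • a) : (1/2:ℝ) • b ≤ a := by
  have := smul_mono' (1/2) (by norm_num) h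
  rwa [half_two] at this

lemma nonpos_of_half {b : X} (h : (1/2:ℝ) • b ≤ 0) : b ≤ 0 := by
  have := smul_mono' 2 (by norm_num) h
  rwa [smul_smul, show (2:ℝ) * (1/2) = 1 by norm_num, one_smul, smul_zero] at this

lemma catching_open : OrderOpen {z : X | NetCatchingElem z} := by
  intro x hx ι _ hne hdir f hf
  have hf0 : ∀ a, 0 ≤ f a := fun a => hf.2.1 (Set.mem_range_self a)
  -- catch the net 2•f
  obtain ⟨α₀, hα₀⟩ := hx ι hne hdir (fun a => (2:ℝ) • f a)
    ⟨fun a b hab => smul_mono' 2 (by norm_num) (hf.1 hab),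
     ⟨fun v hv => by obtain ⟨a, rfl⟩ := hv
                     exact smul_nonneg (by norm_num) (hf0 a),
      fun b hb => by
        refine nonpos_of_half (hf.2.2 (fun v hv => ?_))
        obtain ⟨a, rfl⟩ := hv
        exact half_le' (hb (Set.mem_range_self a))⟩⟩
  refine ⟨α₀, fun z hz κ _ hκne hκdir g hg => ?_⟩
  have hg0 : ∀ b, 0 ≤ g b := fun b => hg.2.1 (Set.mem_range_self b)
  -- combined net on ι × κ
  obtain ⟨p, hp⟩ := hx (ι × κ) ⟨hne.some, hκne.some⟩
    (fun p q => by
      obtain ⟨a, ha1, ha2⟩ := hdir p.1 q.1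
      obtain ⟨b, hb1, hb2⟩ := hκdir p.2 q.2
      exact ⟨(a, b), Prod.le_def.mpr ⟨ha1, hb1⟩, Prod.le_def.mpr ⟨ha2, hb2⟩⟩)
    (fun p => (2:ℝ) • f p.1 + (2:ℝ) • g p.2)
    ⟨fun p q hpq => add_le_add (smul_mono' 2 (by norm_num) (hf.1 (Prod.le_def.mp hpq).1))
        (smul_mono' 2 (by norm_num) (hg.1 (Prod.le_def.mp hpq).2)),
     ⟨fun v hv => by
        obtain ⟨p, rfl⟩ := hv
        exact add_nonneg (smul_nonneg (by norm_num) (hf0 p.1))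
          (smul_nonneg (by norm_num) (hg0 p.2)),
      fun b hb => by
        have key : ∀ a : ι, (1/2:ℝ) • b ≤ f a := by
          intro a
          have h1 : (1/2:ℝ) • b - f a ≤ 0 := by
            refine hg.2.2 (fun v hv => ?_)
            obtain ⟨c, rfl⟩ := hv
            have hbc := hb (Set.mem_range_self ((a, c) : ι × κ))
            have : (1/2:ℝ) • b ≤ f a + g c := by
              have := smul_mono' (1/2) (by norm_num) hbc
              rwa [smul_add, half_two, half_two] at this
            exact sub_le_iff_le_add'.mpr this
          exact sub_nonpos.mp h1
        refine nonpos_of_half (hf.2.2 (fun v hv => ?_))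
        obtain ⟨a, rfl⟩ := hv
        exact key a⟩⟩
  -- hp : 2•f p.1 + 2•g p.2 ≤ x
  refine ⟨p.2, ?_⟩
  have h1 : (2:ℝ) • g p.2 ≤ x := le_trans (le_add_of_nonneg_left
    (smul_nonneg (by norm_num) (hf0 p.1))) hp
  have h2 : g p.2 ≤ (1/2:ℝ) • x := half_le h1
  have h3 : f α₀ ≤ (1/2:ℝ) • x := half_le hα₀
  have e : x - (1/2:ℝ) • x = (1/2:ℝ) • x := by
    rw [eq_comm, eq_sub_iff_add_eq, ← add_smul]; norm_num
  have h4 : (1/2:ℝ) • x ≤ x - f α₀ := by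
    have := sub_le_sub_left h3 x
    rwa [e] at this
  exact le_trans h2 (le_trans h4 hz.1)

end aux

theorem stmt2 {X : Type*} [AddCommGroup X] [PartialOrder X] [IsOrderedAddMonoid X] [Module ℝ X] [PosSMulStrictMono ℝ X] [PosSMulReflectLT ℝ X] :
    {x : X | ∃ O : Set X, OrderOpen O ∧ x ∈ O ∧ O ⊆ {z : X | 0 ≤ z}} =
      {y : X | NetCatchingElem y} := by
  ext x
  simp only [Set.mem_setOf_eq]
  constructor
  · rintro ⟨O, hO, hxO, hOc⟩ ι _ hne hdir f hf
    obtain ⟨α, hα⟩ := hO x hxO ι hne hdir f hf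
    have h0 : 0 ≤ f α := hf.2.1 (Set.mem_range_self α)
    have hmem : x - f α ∈ O := hα ⟨le_refl _, by
      have : x - f α ≤ x := sub_le_self x h0
      exact le_trans this (le_add_of_nonneg_right h0)⟩
    have := hOc hmem
    exact ⟨α, by simpa [sub_nonneg] using this⟩
  · intro hx
    refine ⟨{z : X | NetCatchingElem z}, catching_open, hx, fun z hz => ?_⟩
    obtain ⟨_, h⟩ := hz Unit ⟨()⟩ (fun a b => ⟨(), le_refl _, le_refl _⟩) (fun _ => (0:X))
      ⟨fun _ _ _ => le_refl _, by simp [Set.range_const, isGLB_singleton]⟩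
    exact h
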